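/- There exists C>0 with the following property, for every k∈ℝ with |k|≥1 and all 2π-periodic functions below (norms: ‖g‖_{L^∞}=sup_{y}|g(y)|, ‖g‖_{L¹}=∫₀^{2π}|g(y)|dy). (1) If u∈C²(ℝ,ℂ) is 2π-periodic and h:=u''−k²u, then ‖u'‖_{L^∞}+|k|·‖u‖_{L^∞} ≤ C‖h‖_{L¹}. (2) Under the same assumptions, ‖u''‖_{L^∞}+|k|·‖u'‖_{L^∞}+k²‖u‖_{L^∞} ≤ C‖h‖_{L^∞}. (3) If moreover g∈C²(ℝ,ℂ) is 2π-periodic, f:=u''−k²u, and v∈C²(ℝ,ℂ) is 2π-periodic with v''−k²v=f·g, then ‖(v−gu)'‖_{L^∞}+|k|·‖v−gu‖_{L^∞} ≤ C‖u‖_{L^∞}‖g''‖_{L¹}; (4) ‖v'‖_{L^∞} ≤ C(‖u'‖_{L^∞}‖g‖_{L^∞}+‖u‖_{L^∞}‖g''‖_{L¹}); (5) ‖v‖_{L^∞} ≤ C‖u‖_{L^∞}(‖g‖_{L^∞}+|k|^{−1}‖g''‖_{L¹}). -/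

import Mathlib

open Real MeasureTheory

/-- The sup norm `‖g‖_{L^∞} = sup_y ‖g y‖` of a complex-valued function on `ℝ`. -/
noncomputable def supAbs (g : ℝ → ℂ) : ℝ := ⨆ y : ℝ, ‖g y‖

/-- The `L¹` norm over one period `[0,2π]` of a complex-valued function. -/
noncomputable def l1C (g : ℝ → ℂ) : ℝ := ∫ y in (0:ℝ)..(2*π), ‖g y‖

noncomputable def c0 : ℝ := (1 - Real.exp (-(2*π)))⁻¹

lemma periodic_deriv {f : ℝ → ℂ} {c : ℝ} (h : Function.Periodic f c) :
    Function.Periodic (deriv f) c := by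
  intro x
  have : (fun y => f (y + c)) = f := funext fun y => h y
  rw [← deriv_comp_add_const, this]

lemma expDeriv (k x : ℝ) : HasDerivAt (fun s : ℝ => Real.exp (k*s)) (Real.exp (k*x) * k) x := by
  have h1 : HasDerivAt (fun s : ℝ => k*s) k x := by
    simpa using (hasDerivAt_id x).const_mul k
  exact h1.exp

lemma rep {k : ℝ} (hk : 0 < k) {p h : ℝ → ℂ}
    (hd : ∀ x, HasDerivAt p (h x - k • p x) x)
    (hh : Continuous h) (hper : Function.Periodic p (2*π)) (x : ℝ) :
    (Real.exp (k*x) - Real.exp (k*(x-2*π))) • p x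
      = ∫ s in (x-2*π)..x, Real.exp (k*s) • h s := by
  have hpc : Continuous p := Differentiable.continuous (fun y => (hd y).differentiableAt)
  have hF : ∀ s : ℝ, HasDerivAt (fun t => Real.exp (k*t) • p t) (Real.exp (k*s) • h s) s := by
    intro s
    have := (expDeriv k s).smul (hd s)
    refine this.congr_deriv ?_
    module
  have hint : IntervalIntegrable (fun s => Real.exp (k*s) • h s) volume (x-2*π) x :=
    (((Real.continuous_exp.comp (continuous_const.mul continuous_id)).smul hh)).intervalIntegrable _ _
  have := intervalIntegral.integral_eq_sub_of_hasDerivAt (fun s _ => hF s) hint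
  rw [this, hper.sub_eq x, sub_smul]

lemma key {k : ℝ} (hk : 1 ≤ k) {p a b : ℝ → ℂ}
    (hd : ∀ x, HasDerivAt p (a x - k • b x - k • p x) x)
    (ha : Continuous a) (hb : Continuous b)
    (hpera : Function.Periodic a (2*π)) (hperp : Function.Periodic p (2*π))
    {Mb : ℝ} (hMb : ∀ x, ‖b x‖ ≤ Mb) (x : ℝ) :
    ‖p x‖ ≤ c0 * (∫ s in (0:ℝ)..2*π, ‖a s‖) + Mb := by
  have hπ := Real.pi_pos
  have hk0 : (0:ℝ) < k := lt_of_lt_of_le one_pos hk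
  have hxle : x - 2*π ≤ x := by linarith
  have hMb0 : 0 ≤ Mb := (norm_nonneg _).trans (hMb 0)
  set D : ℝ := Real.exp (k*x) - Real.exp (k*(x-2*π)) with hD
  have hDpos : 0 < D := by
    have : k*(x-2*π) < k*x := by nlinarith
    simpa [hD, sub_pos] using Real.exp_lt_exp.mpr this
  have hd' : ∀ y, HasDerivAt p ((fun y => a y - k • b y) y - k • p y) y := hd
  have hrep := rep hk0 hd' (ha.sub (hb.const_smul k)) hperp x
  set Ia : ℝ := ∫ s in (0:ℝ)..2*π, ‖a s‖ with hIa
  have hIa0 : 0 ≤ Ia :=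
    intervalIntegral.integral_nonneg (by positivity) (fun _ _ => norm_nonneg _)
  -- split the integral
  have hexpc : Continuous fun s : ℝ => Real.exp (k*s) :=
    Real.continuous_exp.comp (continuous_const.mul continuous_id)
  have hint1 : IntervalIntegrable (fun s => Real.exp (k*s) • a s) volume (x-2*π) x :=
    (hexpc.smul ha).intervalIntegrable _ _
  have hint2 : IntervalIntegrable (fun s => Real.exp (k*s) • (k • b s)) volume (x-2*π) x :=
    (hexpc.smul (hb.const_smul k)).intervalIntegrable _ _
  have hsplit : (∫ s in (x-2*π)..x, Real.exp (k*s) • ((fun y => a y - k • b y) s)) =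
      (∫ s in (x-2*π)..x, Real.exp (k*s) • a s)
        - ∫ s in (x-2*π)..x, Real.exp (k*s) • (k • b s) := by
    rw [← intervalIntegral.integral_sub hint1 hint2]
    congr 1; funext s; simp [smul_sub]
  -- bound term 1
  have hbound1 : ‖∫ s in (x-2*π)..x, Real.exp (k*s) • a s‖ ≤ Real.exp (k*x) * Ia := by
    calc ‖∫ s in (x-2*π)..x, Real.exp (k*s) • a s‖
        ≤ ∫ s in (x-2*π)..x, ‖Real.exp (k*s) • a s‖ :=
          intervalIntegral.norm_integral_le_integral_norm hxle
      _ ≤ ∫ s in (x-2*π)..x, Real.exp (k*x) * ‖a s‖ := by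
          apply intervalIntegral.integral_mono_on hxle
            ((hexpc.smul ha).norm.intervalIntegrable _ _)
            ((continuous_const.mul ha.norm).intervalIntegrable _ _)
          intro s hs
          simp only [Pi.smul_apply', Pi.smul_apply, Pi.mul_apply]
          rw [norm_smul, Real.norm_eq_abs, abs_of_pos (Real.exp_pos _)]
          exact mul_le_mul_of_nonneg_right
            (Real.exp_le_exp.mpr (mul_le_mul_of_nonneg_left hs.2 hk0.le)) (norm_nonneg _)
      _ = Real.exp (k*x) * ∫ s in (x-2*π)..x, ‖a s‖ := by
          rw [intervalIntegral.integral_const_mul]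
      _ = Real.exp (k*x) * Ia := by
          congr 1
          have hpn : Function.Periodic (fun s => ‖a s‖) (2*π) := fun s => by simp [hpera s]
          have := hpn.intervalIntegral_add_eq (x-2*π) 0
          simpa using this
  -- bound term 2
  have hintexp : (∫ s in (x-2*π)..x, k * Real.exp (k*s)) = D := by
    have := intervalIntegral.integral_eq_sub_of_hasDerivAt
      (f := fun s : ℝ => Real.exp (k*s)) (f' := fun s => k * Real.exp (k*s))
      (a := x-2*π) (b := x) (fun s _ => by simpa [mul_comm] using expDeriv k s)
      ((continuous_const.mul hexpc).intervalIntegrable _ _)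
    rw [this]
  have hbound2 : ‖∫ s in (x-2*π)..x, Real.exp (k*s) • (k • b s)‖ ≤ Mb * D := by
    calc ‖∫ s in (x-2*π)..x, Real.exp (k*s) • (k • b s)‖
        ≤ ∫ s in (x-2*π)..x, ‖Real.exp (k*s) • (k • b s)‖ :=
          intervalIntegral.norm_integral_le_integral_norm hxle
      _ ≤ ∫ s in (x-2*π)..x, Mb * (k * Real.exp (k*s)) := by
          apply intervalIntegral.integral_mono_on hxle
            ((hexpc.smul (hb.const_smul k)).norm.intervalIntegrable _ _)
            ((continuous_const.mul (continuous_const.mul hexpc)).intervalIntegrable _ _)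
          intro s _
          simp only [Pi.smul_apply', Pi.smul_apply, Pi.mul_apply]
          rw [norm_smul, norm_smul, Real.norm_eq_abs, Real.norm_eq_abs,
            abs_of_pos (Real.exp_pos _), abs_of_pos hk0]
          have h1 := hMb s
          have h2 := mul_le_mul_of_nonneg_left h1 (mul_pos (Real.exp_pos (k*s)) hk0).le
          nlinarith [h2]
      _ = Mb * D := by rw [intervalIntegral.integral_const_mul, hintexp]
  -- combine
  have hDp : D * ‖p x‖ ≤ Real.exp (k*x) * Ia + Mb * D := by
    have h1 : ‖D • p x‖ = D * ‖p x‖ := by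
      rw [norm_smul, Real.norm_eq_abs, abs_of_pos hDpos]
    calc D * ‖p x‖ = ‖D • p x‖ := h1.symm
      _ = ‖(∫ s in (x-2*π)..x, Real.exp (k*s) • a s)
            - ∫ s in (x-2*π)..x, Real.exp (k*s) • (k • b s)‖ := by rw [hrep, hsplit]
      _ ≤ _ := (norm_sub_le _ _).trans (add_le_add hbound1 hbound2)
  -- exp(kx) ≤ c0 * D
  have hc0D : Real.exp (k*x) ≤ c0 * D := by
    have he : Real.exp (k*(x-2*π)) = Real.exp (k*x) * Real.exp (-(2*π)*k) := by
      rw [← Real.exp_add]; ring_nf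
    have h2 : Real.exp (-(2*π)*k) ≤ Real.exp (-(2*π)) := by
      apply Real.exp_le_exp.mpr; nlinarith
    have h3 : Real.exp (-(2*π)) < 1 := by
      rw [Real.exp_lt_one_iff]; linarith
    have hc0 : c0 = (1 - Real.exp (-(2*π)))⁻¹ := rfl
    have h4 : 0 < 1 - Real.exp (-(2*π)) := by linarith
    have h5 : D = Real.exp (k*x) * (1 - Real.exp (-(2*π)*k)) := by rw [hD, he]; ring
    have hex := Real.exp_pos (k*x)
    have h6 : (1:ℝ) ≤ (1 - Real.exp (-(2*π)))⁻¹ * (1 - Real.exp (-(2*π)*k)) := by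
      have h7 := mul_le_mul_of_nonneg_left (show 1 - Real.exp (-(2*π)) ≤ 1 - Real.exp (-(2*π)*k) by linarith) (inv_nonneg.mpr h4.le)
      rwa [inv_mul_cancel₀ (ne_of_gt h4)] at h7
    calc Real.exp (k*x) = Real.exp (k*x) * 1 := by ring
      _ ≤ Real.exp (k*x) * ((1 - Real.exp (-(2*π)))⁻¹ * (1 - Real.exp (-(2*π)*k))) :=
          mul_le_mul_of_nonneg_left h6 hex.le
      _ = c0 * D := by rw [h5, hc0]; ring
  nlinarith [mul_le_mul_of_nonneg_right hc0D hIa0]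

lemma master {k : ℝ} (hk : 1 ≤ k) {w W1 W2 a b B B1 : ℝ → ℂ}
    (hw : ∀ x, HasDerivAt w (W1 x) x) (hW1 : ∀ x, HasDerivAt W1 (W2 x) x)
    (hB : ∀ x, HasDerivAt B (B1 x) x)
    (ha : Continuous a) (hbc : Continuous b)
    (hperw : Function.Periodic w (2*π)) (hperW1 : Function.Periodic W1 (2*π))
    (hpera : Function.Periodic a (2*π)) (hperB : Function.Periodic B (2*π))
    (heq : ∀ x, W2 x - (k^2 : ℝ) • w x = a x - k • b x + B1 x)
    {Mb MB : ℝ} (hMb : ∀ x, ‖b x‖ ≤ Mb) (hMB : ∀ x, ‖B x‖ ≤ MB) (x : ℝ) :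
    ‖W1 x‖ ≤ c0 * (∫ s in (0:ℝ)..2*π, ‖a s‖) + Mb + 2*MB ∧
    k * ‖w x‖ ≤ c0 * (∫ s in (0:ℝ)..2*π, ‖a s‖) + Mb + 2*MB := by
  have hπ := Real.pi_pos
  have hk0 : (0:ℝ) < k := lt_of_lt_of_le one_pos hk
  have hBc : Continuous B := Differentiable.continuous fun y => (hB y).differentiableAt
  set Ia : ℝ := ∫ s in (0:ℝ)..2*π, ‖a s‖ with hIa
  set K : ℝ := c0 * Ia + Mb + 2*MB with hK
  have hW2eq : ∀ y, W2 y = (k^2 : ℝ) • w y + (a y - k • b y + B1 y) := by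
    intro y; have := heq y; rw [sub_eq_iff_eq_add] at this; rw [this]; module
  -- p side
  have hP : ∀ y, ‖W1 y - k • w y‖ ≤ K := by
    set r : ℝ → ℂ := fun y => W1 y - k • w y - B y with hr
    have hrd : ∀ y, HasDerivAt r (a y - k • (b y + B y) - k • r y) y := by
      intro y
      have h0 := ((hW1 y).sub ((hw y).const_smul k)).sub (hB y)
      refine h0.congr_deriv ?_
      rw [hW2eq y]; simp only [hr]; module
    have hrper : Function.Periodic r (2*π) := by
      intro y; simp only [hr]; rw [hperW1 y, hperw y, hperB y]
    have hkey := key hk hrd ha (hbc.add hBc) hpera hrper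
      (Mb := Mb + MB) (fun y => (norm_add_le _ _).trans (add_le_add (hMb y) (hMB y)))
    intro y
    have h1 : W1 y - k • w y = r y + B y := by simp only [hr]; ring
    rw [h1]
    calc ‖r y + B y‖ ≤ ‖r y‖ + ‖B y‖ := norm_add_le _ _
      _ ≤ (c0 * Ia + (Mb + MB)) + MB := add_le_add (hkey y) (hMB y)
      _ = K := by rw [hK]; ring
  -- q side (reflected)
  have hQ : ∀ y, ‖W1 y + k • w y‖ ≤ K := by
    set r : ℝ → ℂ := fun y => W1 (-y) + k • w (-y) - B (-y) with hr
    have hrd : ∀ y, HasDerivAt r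
        ((fun z => -a (-z)) y - k • ((fun z => -b (-z) + B (-z)) y) - k • r y) y := by
      intro y
      have hn : HasDerivAt (fun z : ℝ => -z) (-1 : ℝ) y := by
        exact (hasDerivAt_id' y).neg
      have h1 : HasDerivAt (fun z => W1 (-z)) ((-1 : ℝ) • W2 (-y)) y :=
        (hW1 (-y)).scomp y hn
      have h2 : HasDerivAt (fun z => w (-z)) ((-1 : ℝ) • W1 (-y)) y :=
        (hw (-y)).scomp y hn
      have h3 : HasDerivAt (fun z => B (-z)) ((-1 : ℝ) • B1 (-y)) y :=
        (hB (-y)).scomp y hn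
      have h0 := (h1.add (h2.const_smul k)).sub h3
      refine h0.congr_deriv ?_
      rw [hW2eq (-y)]; simp only [hr]; module
    have hrper : Function.Periodic r (2*π) := by
      intro y; simp only [hr]
      have e1 : -(y + 2*π) = -y - 2*π := by ring
      rw [e1, hperW1.sub_eq, hperw.sub_eq, hperB.sub_eq]
    have hanc : Continuous fun z : ℝ => -a (-z) := (ha.comp continuous_neg).neg
    have haper : Function.Periodic (fun z : ℝ => -a (-z)) (2*π) := by
      intro y
      have e1 : -(y + 2*π) = -y - 2*π := by ring
      simp only [e1, hpera.sub_eq]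
    have hbnc : Continuous fun z : ℝ => -b (-z) + B (-z) :=
      ((hbc.comp continuous_neg).neg).add (hBc.comp continuous_neg)
    have hIaeq : (∫ s in (0:ℝ)..2*π, ‖(fun z : ℝ => -a (-z)) s‖) = Ia := by
      simp only [norm_neg]
      rw [show (∫ s in (0:ℝ)..2*π, ‖a (-s)‖) = ∫ s in -(2*π)..(-(0:ℝ)), ‖a s‖ from
        intervalIntegral.integral_comp_neg (f := fun s => ‖a s‖)]
      have hpn : Function.Periodic (fun s => ‖a s‖) (2*π) := fun s => by simp [hpera s]
      have h5 := hpn.intervalIntegral_add_eq (-(2*π)) 0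
      simp only [neg_zero, zero_add] at h5 ⊢
      rw [show -(2*π) + 2*π = 0 by ring] at h5
      exact h5
    have hkey := key hk hrd hanc hbnc haper hrper
      (Mb := Mb + MB) (fun y => (norm_add_le _ _).trans
        (add_le_add (by simpa using hMb (-y)) (hMB (-y)))) 
    intro y
    have h6 := hkey (-y)
    rw [hIaeq] at h6
    simp only [hr, neg_neg] at h6
    have h7 : W1 y + k • w y = (W1 y + k • w y - B y) + B y := by ring
    rw [h7]
    calc ‖(W1 y + k • w y - B y) + B y‖ ≤ ‖W1 y + k • w y - B y‖ + ‖B y‖ := norm_add_le _ _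
      _ ≤ (c0 * Ia + (Mb + MB)) + MB := add_le_add h6 (hMB y)
      _ = K := by rw [hK]; ring
  constructor
  · have h1 : W1 x = (2:ℝ)⁻¹ • ((W1 x - k • w x) + (W1 x + k • w x)) := by module
    rw [h1, norm_smul]
    calc ‖(2:ℝ)⁻¹‖ * ‖(W1 x - k • w x) + (W1 x + k • w x)‖
        ≤ (2:ℝ)⁻¹ * (‖W1 x - k • w x‖ + ‖W1 x + k • w x‖) := by
          rw [Real.norm_eq_abs, abs_of_pos (by norm_num)]
          exact mul_le_mul_of_nonneg_left (norm_add_le _ _) (by norm_num)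
      _ ≤ (2:ℝ)⁻¹ * (K + K) := by
          exact mul_le_mul_of_nonneg_left (add_le_add (hP x) (hQ x)) (by norm_num)
      _ = K := by ring
  · have h1 : k • w x = (2:ℝ)⁻¹ • ((W1 x + k • w x) - (W1 x - k • w x)) := by module
    have h2 : k * ‖w x‖ = ‖k • w x‖ := by
      rw [norm_smul, Real.norm_eq_abs, abs_of_pos hk0]
    rw [h2, h1, norm_smul]
    calc ‖(2:ℝ)⁻¹‖ * ‖(W1 x + k • w x) - (W1 x - k • w x)‖
        ≤ (2:ℝ)⁻¹ * (‖W1 x + k • w x‖ + ‖W1 x - k • w x‖) := by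
          rw [Real.norm_eq_abs, abs_of_pos (by norm_num)]
          exact mul_le_mul_of_nonneg_left (norm_sub_le _ _) (by norm_num)
      _ ≤ (2:ℝ)⁻¹ * (K + K) := by
          exact mul_le_mul_of_nonneg_left (add_le_add (hQ x) (hP x)) (by norm_num)
      _ = K := by ring

lemma gprime_bound {g g1 g2 : ℝ → ℂ}
    (hg1 : ∀ x, HasDerivAt g (g1 x) x) (hg2 : ∀ x, HasDerivAt g1 (g2 x) x)
    (hg2c : Continuous g2) (hper : Function.Periodic g (2*π)) (x : ℝ) :
    ‖g1 x‖ ≤ ∫ s in (0:ℝ)..2*π, ‖g2 s‖ := by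
  have hπ := Real.pi_pos
  have hxle : x - 2*π ≤ x := by linarith
  have hg1d : Differentiable ℝ g1 := fun y => (hg2 y).differentiableAt
  have hg1c : Continuous g1 := hg1d.continuous
  set I2 : ℝ := ∫ s in (0:ℝ)..2*π, ‖g2 s‖ with hI2
  have hI2per : (∫ s in (x-2*π)..x, ‖g2 s‖) = I2 := by
    have hpn : Function.Periodic (fun s => ‖g2 s‖) (2*π) := by
      have hperg1 : Function.Periodic g1 (2*π) := by
        have he : g1 = deriv g := funext fun y => ((hg1 y).deriv).symm
        rw [he]; exact periodic_deriv hper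
      have hperg2 : Function.Periodic g2 (2*π) := by
        have he : g2 = deriv g1 := funext fun y => ((hg2 y).deriv).symm
        rw [he]; exact periodic_deriv hperg1
      intro s; simp [hperg2 s]
    have h5 := hpn.intervalIntegral_add_eq (x-2*π) 0
    simpa using h5
  have hFTC0 : (∫ s in (x-2*π)..x, g1 s) = 0 := by
    rw [intervalIntegral.integral_eq_sub_of_hasDerivAt (fun s _ => hg1 s)
      (hg1c.intervalIntegrable _ _), hper.sub_eq x, sub_self]
  have hconst : (∫ _ in (x-2*π)..x, g1 x) = (2*π : ℝ) • g1 x := by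
    rw [intervalIntegral.integral_const]
    congr 1; ring
  have hsub : (∫ s in (x-2*π)..x, (g1 x - g1 s)) = (2*π : ℝ) • g1 x := by
    rw [intervalIntegral.integral_sub (intervalIntegrable_const)
      (hg1c.intervalIntegrable _ _), hFTC0, hconst, sub_zero]
  have hpt : ∀ s ∈ Set.Icc (x-2*π) x, ‖g1 x - g1 s‖ ≤ I2 := by
    intro s hs
    have hFTC : (∫ t in s..x, g2 t) = g1 x - g1 s :=
      intervalIntegral.integral_eq_sub_of_hasDerivAt (fun t _ => hg2 t)
        (hg2c.intervalIntegrable _ _)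
    rw [← hFTC]
    calc ‖∫ t in s..x, g2 t‖ ≤ ∫ t in s..x, ‖g2 t‖ :=
          intervalIntegral.norm_integral_le_integral_norm hs.2
      _ ≤ ∫ t in (x-2*π)..x, ‖g2 t‖ := by
          apply intervalIntegral.integral_mono_interval hs.1 hs.2 le_rfl
          · filter_upwards with t using norm_nonneg _
          · exact (hg2c.norm.intervalIntegrable _ _)
      _ = I2 := hI2per
  have hmain : (2*π) * ‖g1 x‖ ≤ (2*π) * I2 := by
    have h1 : ‖(2*π : ℝ) • g1 x‖ = (2*π) * ‖g1 x‖ := by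
      rw [norm_smul, Real.norm_eq_abs, abs_of_pos (by linarith)]
    calc (2*π) * ‖g1 x‖ = ‖∫ s in (x-2*π)..x, (g1 x - g1 s)‖ := by rw [hsub, h1]
      _ ≤ ∫ s in (x-2*π)..x, ‖g1 x - g1 s‖ :=
          intervalIntegral.norm_integral_le_integral_norm hxle
      _ ≤ ∫ _ in (x-2*π)..x, I2 := by
          apply intervalIntegral.integral_mono_on hxle
            ((continuous_const.sub hg1c).norm.intervalIntegrable _ _)
            intervalIntegrable_const
          exact hpt
      _ = (2*π) * I2 := by rw [intervalIntegral.integral_const, smul_eq_mul]; ring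
  nlinarith

lemma pack {f : ℝ → ℂ} (hf : ContDiff ℝ 2 f) (hp : Function.Periodic f (2*π)) :
    (∀ x, HasDerivAt f (deriv f x) x) ∧ (∀ x, HasDerivAt (deriv f) (deriv (deriv f) x) x) ∧
    Continuous f ∧ Continuous (deriv f) ∧ Continuous (deriv (deriv f)) ∧
    Function.Periodic (deriv f) (2*π) ∧ Function.Periodic (deriv (deriv f)) (2*π) := by
  have hf' : ContDiff ℝ (1+1) f := by norm_num; exact hf
  have h1 : ContDiff ℝ 1 (deriv f) := (contDiff_succ_iff_deriv.mp hf').2.2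
  have hd1 : Differentiable ℝ f := (contDiff_succ_iff_deriv.mp hf').1
  have hd2 : Differentiable ℝ (deriv f) := h1.differentiable one_ne_zero
  exact ⟨fun x => (hd1 x).hasDerivAt, fun x => (hd2 x).hasDerivAt,
    hf.continuous, h1.continuous, h1.continuous_deriv le_rfl,
    periodic_deriv hp, periodic_deriv (periodic_deriv hp)⟩

lemma c0_pos : 0 < c0 := by
  rw [c0]
  have h1 : Real.exp (-(2*π)) < 1 := by
    rw [Real.exp_lt_one_iff]
    have := Real.pi_pos; linarith
  have : 0 < 1 - Real.exp (-(2*π)) := by linarith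
  positivity

lemma supAbs_nonneg (f : ℝ → ℂ) : 0 ≤ supAbs f :=
  Real.iSup_nonneg fun y => norm_nonneg _

lemma supAbs_le {f : ℝ → ℂ} {M : ℝ} (hM : 0 ≤ M) (h : ∀ y, ‖f y‖ ≤ M) : supAbs f ≤ M :=
  Real.iSup_le h hM

lemma le_supAbs {f : ℝ → ℂ} (hf : Continuous f) (hp : Function.Periodic f (2*π)) (y : ℝ) :
    ‖f y‖ ≤ supAbs f := by
  obtain ⟨M, hM⟩ : ∃ M, ∀ z ∈ Set.Icc (0:ℝ) (2*π), ‖f z‖ ≤ M := by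
    obtain ⟨M, hM⟩ := (isCompact_Icc (a := (0:ℝ)) (b := 2*π)).exists_bound_of_continuousOn
      ((hf.norm).continuousOn (s := Set.Icc 0 (2*π)))
    exact ⟨M, fun z hz => (le_abs_self _).trans (hM z hz)⟩
  have hbdd : BddAbove (Set.range fun y => ‖f y‖) := by
    refine ⟨M, ?_⟩
    rintro r ⟨z, rfl⟩
    obtain ⟨z', hz', hzz'⟩ := hp.exists_mem_Ico₀ (by positivity) z
    calc ‖f z‖ = ‖f z'‖ := by rw [hzz']
    _ ≤ M := hM z' ⟨hz'.1, hz'.2.le⟩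
  exact le_ciSup hbdd y

lemma l1C_nonneg (f : ℝ → ℂ) : 0 ≤ l1C f :=
  intervalIntegral.integral_nonneg (by positivity) (fun _ _ => norm_nonneg _)

lemma partA {k : ℝ} (hk : 1 ≤ |k|) {u : ℝ → ℂ} (hu : ContDiff ℝ 2 u)
    (hpu : Function.Periodic u (2*π)) :
    (supAbs (deriv u) + |k| * supAbs u
        ≤ (4*c0+10) * l1C (fun y => deriv (deriv u) y - (k:ℂ)^2 * u y)) ∧
    (supAbs (deriv (deriv u)) + |k| * supAbs (deriv u) + k^2 * supAbs u
        ≤ (4*c0+10) * supAbs (fun y => deriv (deriv u) y - (k:ℂ)^2 * u y)) := by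
  have hc0 := c0_pos
  set κ := |k| with hκ
  have hκ0 : (0:ℝ) < κ := lt_of_lt_of_le one_pos hk
  obtain ⟨hu1, hu2, huc, hu'c, hu''c, hpu', hpu''⟩ := pack hu hpu
  set h : ℝ → ℂ := fun y => deriv (deriv u) y - (k:ℂ)^2 * u y with hhdef
  have hhc : Continuous h := hu''c.sub (continuous_const.mul huc)
  have hph : Function.Periodic h (2*π) := fun y => by simp only [hhdef, hpu'' y, hpu y]
  have hsm : ∀ z : ℂ, (κ^2:ℝ) • z = (k:ℂ)^2 * z := by
    intro z
    rw [Complex.real_smul]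
    norm_cast
    rw [hκ, sq_abs]
  -- part (1)
  constructor
  · have hm := master (k := κ) hk hu1 hu2 (B := fun _ => (0:ℂ)) (B1 := fun _ => (0:ℂ))
      (fun x => hasDerivAt_const x 0) hhc (b := fun _ => (0:ℂ)) continuous_const
      hpu hpu' hph (fun _ => rfl)
      (heq := fun x => by rw [hsm]; simp only [hhdef, smul_zero]; ring)
      (Mb := 0) (fun x => by simp) (MB := 0) (fun x => by simp)
    set R : ℝ := c0 * l1C h with hR
    have hR0 : 0 ≤ R := mul_nonneg hc0.le (l1C_nonneg h)
    have e1 : supAbs (deriv u) ≤ R := by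
      apply supAbs_le hR0
      intro y
      have := (hm y).1
      simpa [l1C, hR] using this
    have e2 : κ * supAbs u ≤ R := by
      have e3 : supAbs u ≤ κ⁻¹ * R := by
        apply supAbs_le (by positivity)
        intro y
        have h4 := (hm y).2
        simp only [add_zero, mul_zero] at h4
        rw [← mul_le_mul_iff_right₀ hκ0]
        calc κ * ‖u y‖ ≤ c0 * (∫ s in (0:ℝ)..2*π, ‖h s‖) := by simpa using h4
          _ = R := by rw [hR]; rfl
          _ = κ * (κ⁻¹ * R) := by field_simp
      calc κ * supAbs u ≤ κ * (κ⁻¹ * R) := mul_le_mul_of_nonneg_left e3 hκ0.le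
        _ = R := by field_simp
    have : (0:ℝ) ≤ l1C h := l1C_nonneg h
    calc supAbs (deriv u) + κ * supAbs u ≤ R + R := add_le_add e1 e2
      _ = 2 * c0 * l1C h := by rw [hR]; ring
      _ ≤ (4*c0+10) * l1C h := by nlinarith
  · set Mh : ℝ := supAbs h with hMh
    have hMhle : ∀ y, ‖h y‖ ≤ Mh := le_supAbs hhc hph
    have hMh0 : 0 ≤ Mh := supAbs_nonneg h
    have hm := master (k := κ) hk hu1 hu2 (B := fun _ => (0:ℂ)) (B1 := fun _ => (0:ℂ))
      (fun x => hasDerivAt_const x 0) (a := fun _ => (0:ℂ)) continuous_const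
      (b := fun y => -((κ⁻¹:ℝ) • h y)) (by exact (hhc.const_smul (κ⁻¹:ℝ)).neg)
      hpu hpu' (fun _ => rfl) (fun _ => rfl)
      (heq := fun x => by
        rw [hsm]
        simp only [smul_neg, smul_smul, mul_inv_cancel₀ (ne_of_gt hκ0), one_smul, hhdef]
        ring)
      (Mb := κ⁻¹ * Mh) (fun y => by
        rw [norm_neg, norm_smul, Real.norm_eq_abs, abs_of_pos (by positivity)]
        exact mul_le_mul_of_nonneg_left (hMhle y) (by positivity))
      (MB := 0) (fun x => by simp)
    have hz : (∫ s in (0:ℝ)..2*π, ‖(0:ℂ)‖) = 0 := by simp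
    have S1 : ∀ y, ‖deriv u y‖ ≤ κ⁻¹ * Mh := by
      intro y
      have := (hm y).1
      rw [hz] at this
      linarith
    have S2 : ∀ y, κ * ‖u y‖ ≤ κ⁻¹ * Mh := by
      intro y
      have := (hm y).2
      rw [hz] at this
      linarith
    have e1 : supAbs (deriv (deriv u)) ≤ 2 * Mh := by
      apply supAbs_le (by positivity)
      intro y
      have h5 : deriv (deriv u) y = h y + (k:ℂ)^2 * u y := by simp only [hhdef]; ring
      have h6 : ‖(k:ℂ)^2 * u y‖ = κ^2 * ‖u y‖ := by
        rw [norm_mul, norm_pow, Complex.norm_real, Real.norm_eq_abs, hκ]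
      have h7 : κ^2 * ‖u y‖ ≤ Mh := by
        have := S2 y
        have h8 : κ * (κ * ‖u y‖) ≤ κ * (κ⁻¹ * Mh) := mul_le_mul_of_nonneg_left this hκ0.le
        calc κ^2 * ‖u y‖ = κ * (κ * ‖u y‖) := by ring
          _ ≤ κ * (κ⁻¹ * Mh) := h8
          _ = Mh := by field_simp
      calc ‖deriv (deriv u) y‖ = ‖h y + (k:ℂ)^2 * u y‖ := by rw [h5]
        _ ≤ ‖h y‖ + ‖(k:ℂ)^2 * u y‖ := norm_add_le _ _
        _ ≤ Mh + Mh := by rw [h6]; exact add_le_add (hMhle y) h7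
        _ = 2 * Mh := by ring
    have e2 : κ * supAbs (deriv u) ≤ Mh := by
      have e3 : supAbs (deriv u) ≤ κ⁻¹ * Mh := supAbs_le (by positivity) S1
      calc κ * supAbs (deriv u) ≤ κ * (κ⁻¹ * Mh) := mul_le_mul_of_nonneg_left e3 hκ0.le
        _ = Mh := by field_simp
    have e3 : k^2 * supAbs u ≤ Mh := by
      have e4 : supAbs u ≤ κ⁻¹ * (κ⁻¹ * Mh) := by
        apply supAbs_le (by positivity)
        intro y
        have := S2 y
        rw [← mul_le_mul_iff_right₀ hκ0]
        calc κ * ‖u y‖ ≤ κ⁻¹ * Mh := this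
          _ = κ * (κ⁻¹ * (κ⁻¹ * Mh)) := by field_simp
      have hk2 : k^2 = κ^2 := by rw [hκ, sq_abs]
      rw [hk2]
      calc κ^2 * supAbs u ≤ κ^2 * (κ⁻¹ * (κ⁻¹ * Mh)) := by
            exact mul_le_mul_of_nonneg_left e4 (by positivity)
        _ = Mh := by field_simp
    calc supAbs (deriv (deriv u)) + κ * supAbs (deriv u) + k^2 * supAbs u
        ≤ 2*Mh + Mh + Mh := by
          exact add_le_add (add_le_add e1 e2) e3
      _ = 4 * Mh := by ring
      _ ≤ (4*c0+10) * Mh := by nlinarith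

lemma partB {k : ℝ} (hk : 1 ≤ |k|) {u g v : ℝ → ℂ}
    (hu : ContDiff ℝ 2 u) (hpu : Function.Periodic u (2*π))
    (hg : ContDiff ℝ 2 g) (hpg : Function.Periodic g (2*π))
    (hv : ContDiff ℝ 2 v) (hpv : Function.Periodic v (2*π))
    (hfv : ∀ y : ℝ, deriv (deriv v) y - (k:ℂ)^2 * v y
        = (deriv (deriv u) y - (k:ℂ)^2 * u y) * g y) :
    (supAbs (deriv (fun y => v y - g y * u y)) + |k| * supAbs (fun y => v y - g y * u y)
        ≤ (4*c0+10) * supAbs u * l1C (deriv (deriv g))) ∧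
    (supAbs (deriv v)
        ≤ (4*c0+10) * (supAbs (deriv u) * supAbs g + supAbs u * l1C (deriv (deriv g)))) ∧
    (supAbs v ≤ (4*c0+10) * supAbs u * (supAbs g + |k|⁻¹ * l1C (deriv (deriv g)))) := by
  have hc0 := c0_pos
  have hπ := Real.pi_pos
  set κ := |k| with hκ
  have hκ0 : (0:ℝ) < κ := lt_of_lt_of_le one_pos hk
  obtain ⟨hu1, hu2, huc, hu'c, hu''c, hpu', hpu''⟩ := pack hu hpu
  obtain ⟨hg1, hg2, hgc, hg'c, hg''c, hpg', hpg''⟩ := pack hg hpg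
  obtain ⟨hv1, hv2, hvc, hv'c, hv''c, hpv', hpv''⟩ := pack hv hpv
  have hsm : ∀ z : ℂ, (κ^2:ℝ) • z = (k:ℂ)^2 * z := by
    intro z
    rw [Complex.real_smul]
    norm_cast
    rw [hκ, sq_abs]
  set wfun : ℝ → ℂ := fun y => v y - g y * u y with hwdef
  set W1 : ℝ → ℂ := fun y => deriv v y - (deriv g y * u y + g y * deriv u y) with hW1def
  set W2 : ℝ → ℂ := fun y => deriv (deriv v) y -
    (deriv (deriv g) y * u y + 2*(deriv g y * deriv u y) + g y * deriv (deriv u) y) with hW2def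
  have hw : ∀ x, HasDerivAt wfun (W1 x) x := fun x => (hv1 x).sub ((hg1 x).mul (hu1 x))
  have hW1d : ∀ x, HasDerivAt W1 (W2 x) x := by
    intro x
    have h0 := (hv2 x).sub (((hg2 x).mul (hu1 x)).add ((hg1 x).mul (hu2 x)))
    refine h0.congr_deriv ?_
    simp only [hW2def]
    ring
  set a : ℝ → ℂ := fun y => deriv (deriv g) y * u y with hadef
  set B : ℝ → ℂ := fun y => (-2:ℂ) * (deriv g y * u y) with hBdef
  set B1 : ℝ → ℂ := fun y => (-2:ℂ) * (deriv (deriv g) y * u y + deriv g y * deriv u y)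
    with hB1def
  have hB : ∀ x, HasDerivAt B (B1 x) x := fun x => ((hg2 x).mul (hu1 x)).const_mul (-2:ℂ)
  have hperw : Function.Periodic wfun (2*π) := fun y => by
    simp only [hwdef, hpv y, hpg y, hpu y]
  have hperW1 : Function.Periodic W1 (2*π) := fun y => by
    simp only [hW1def, hpv' y, hpg' y, hpu y, hpg y, hpu' y]
  have hpera : Function.Periodic a (2*π) := fun y => by
    simp only [hadef, hpg'' y, hpu y]
  have hperB : Function.Periodic B (2*π) := fun y => by
    simp only [hBdef, hpg' y, hpu y]
  have heq : ∀ x, W2 x - (κ^2:ℝ) • wfun x = a x - κ • (0:ℂ) + B1 x := by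
    intro x
    rw [hsm]
    simp only [smul_zero, hW2def, hwdef, hadef, hB1def, sub_zero]
    linear_combination (hfv x)
  set Mu : ℝ := supAbs u with hMu
  set Mu' : ℝ := supAbs (deriv u) with hMu'
  set Mg : ℝ := supAbs g with hMg
  set Ig2 : ℝ := l1C (deriv (deriv g)) with hIg2
  have hMu0 : 0 ≤ Mu := supAbs_nonneg u
  have hMu'0 : 0 ≤ Mu' := supAbs_nonneg _
  have hMg0 : 0 ≤ Mg := supAbs_nonneg g
  have hIg20 : 0 ≤ Ig2 := l1C_nonneg _
  have hule : ∀ y, ‖u y‖ ≤ Mu := le_supAbs huc hpu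
  have hu'le : ∀ y, ‖deriv u y‖ ≤ Mu' := le_supAbs hu'c hpu'
  have hgle : ∀ y, ‖g y‖ ≤ Mg := le_supAbs hgc hpg
  have hgple : ∀ y, ‖deriv g y‖ ≤ Ig2 := fun y => gprime_bound hg1 hg2 hg''c hpg y
  have hMB : ∀ y, ‖B y‖ ≤ 2 * (Ig2 * Mu) := by
    intro y
    simp only [hBdef]
    rw [norm_mul, norm_mul]
    have : ‖(-2:ℂ)‖ = 2 := by norm_num
    rw [this]
    have := mul_le_mul (hgple y) (hule y) (norm_nonneg _) hIg20
    nlinarith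
  have hIa : (∫ s in (0:ℝ)..2*π, ‖a s‖) ≤ Ig2 * Mu := by
    calc (∫ s in (0:ℝ)..2*π, ‖a s‖) ≤ ∫ s in (0:ℝ)..2*π, ‖deriv (deriv g) s‖ * Mu := by
          apply intervalIntegral.integral_mono_on (by linarith)
            ((hg''c.mul huc).norm.intervalIntegrable _ _)
            ((hg''c.norm.mul continuous_const).intervalIntegrable _ _)
          intro s _
          simp only [hadef, norm_mul, Pi.mul_apply]
          exact mul_le_mul_of_nonneg_left (hule s) (norm_nonneg _)
      _ = Ig2 * Mu := by
          rw [intervalIntegral.integral_mul_const]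
          rfl
  have hm := master (k := κ) (a := a) hk hw hW1d hB (hg''c.mul huc) continuous_const
    hperw hperW1 hpera hperB heq
    (Mb := 0) (fun x => by simp) (MB := 2 * (Ig2 * Mu)) hMB
  set K3 : ℝ := (c0 + 4) * (Mu * Ig2) with hK3
  have hK30 : 0 ≤ K3 := by positivity
  have hWb : ∀ y, ‖W1 y‖ ≤ K3 := by
    intro y
    have h1 := (hm y).1
    have h2 := mul_le_mul_of_nonneg_left hIa hc0.le
    rw [hK3]
    nlinarith
  have hwb : ∀ y, κ * ‖wfun y‖ ≤ K3 := by
    intro y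
    have h1 := (hm y).2
    have h2 := mul_le_mul_of_nonneg_left hIa hc0.le
    rw [hK3]
    nlinarith
  have hdw : deriv wfun = W1 := funext fun y => (hw y).deriv
  refine ⟨?_, ?_, ?_⟩
  · have e1 : supAbs (deriv wfun) ≤ K3 := by
      rw [hdw]
      exact supAbs_le hK30 hWb
    have e2 : κ * supAbs wfun ≤ K3 := by
      have e3 : supAbs wfun ≤ κ⁻¹ * K3 := by
        apply supAbs_le (by positivity)
        intro y
        have := hwb y
        rw [← mul_le_mul_iff_right₀ hκ0]
        calc κ * ‖wfun y‖ ≤ K3 := this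
          _ = κ * (κ⁻¹ * K3) := by field_simp
      calc κ * supAbs wfun ≤ κ * (κ⁻¹ * K3) := mul_le_mul_of_nonneg_left e3 hκ0.le
        _ = K3 := by field_simp
    calc supAbs (deriv wfun) + κ * supAbs wfun ≤ K3 + K3 := add_le_add e1 e2
      _ = (2*c0+8) * (Mu * Ig2) := by rw [hK3]; ring
      _ ≤ (4*c0+10) * Mu * Ig2 := by nlinarith [mul_nonneg hMu0 hIg20]
  · apply supAbs_le (by positivity)
    intro y
    have h5 : deriv v y = W1 y + (deriv g y * u y + g y * deriv u y) := by
      simp only [hW1def]; ring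
    have h6 : ‖deriv g y * u y + g y * deriv u y‖ ≤ Ig2 * Mu + Mg * Mu' := by
      calc ‖deriv g y * u y + g y * deriv u y‖
          ≤ ‖deriv g y * u y‖ + ‖g y * deriv u y‖ := norm_add_le _ _
        _ ≤ Ig2 * Mu + Mg * Mu' := by
            rw [norm_mul, norm_mul]
            exact add_le_add
              (mul_le_mul (hgple y) (hule y) (norm_nonneg _) hIg20)
              (mul_le_mul (hgle y) (hu'le y) (norm_nonneg _) hMg0)
    calc ‖deriv v y‖ = ‖W1 y + (deriv g y * u y + g y * deriv u y)‖ := by rw [h5]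
      _ ≤ ‖W1 y‖ + ‖deriv g y * u y + g y * deriv u y‖ := norm_add_le _ _
      _ ≤ K3 + (Ig2 * Mu + Mg * Mu') := add_le_add (hWb y) h6
      _ ≤ (4*c0+10) * (Mu' * Mg + Mu * Ig2) := by rw [hK3]; nlinarith [mul_nonneg hMu0 hIg20, mul_nonneg hMg0 hMu'0]
  · apply supAbs_le (by positivity)
    intro y
    have h5 : v y = wfun y + g y * u y := by simp only [hwdef]; ring
    have h7 : ‖wfun y‖ ≤ κ⁻¹ * K3 := by
      have := hwb y
      rw [← mul_le_mul_iff_right₀ hκ0]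
      calc κ * ‖wfun y‖ ≤ K3 := this
        _ = κ * (κ⁻¹ * K3) := by field_simp
    have hκi0 : 0 ≤ κ⁻¹ := by positivity
    calc ‖v y‖ = ‖wfun y + g y * u y‖ := by rw [h5]
      _ ≤ ‖wfun y‖ + ‖g y * u y‖ := norm_add_le _ _
      _ ≤ κ⁻¹ * K3 + Mg * Mu := by
          refine add_le_add h7 ?_
          rw [norm_mul]
          exact mul_le_mul (hgle y) (hule y) (norm_nonneg _) hMg0
      _ ≤ (4*c0+10) * Mu * (Mg + κ⁻¹ * Ig2) := by
          rw [hK3]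
          nlinarith [mul_nonneg (mul_nonneg hκi0 hMu0) hIg20, mul_nonneg hMu0 hMg0]

theorem stmt18 :
    ∃ C : ℝ, 0 < C ∧ ∀ (k : ℝ), 1 ≤ |k| →
      (∀ (u : ℝ → ℂ), ContDiff ℝ 2 u → Function.Periodic u (2*π) →
        (supAbs (deriv u) + |k| * supAbs u
            ≤ C * l1C (fun y => deriv (deriv u) y - (k:ℂ)^2 * u y)) ∧
        (supAbs (deriv (deriv u)) + |k| * supAbs (deriv u) + k^2 * supAbs u
            ≤ C * supAbs (fun y => deriv (deriv u) y - (k:ℂ)^2 * u y))) ∧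
      (∀ (u g v : ℝ → ℂ), ContDiff ℝ 2 u → Function.Periodic u (2*π) →
        ContDiff ℝ 2 g → Function.Periodic g (2*π) →
        ContDiff ℝ 2 v → Function.Periodic v (2*π) →
        (∀ y : ℝ, deriv (deriv v) y - (k:ℂ)^2 * v y
            = (deriv (deriv u) y - (k:ℂ)^2 * u y) * g y) →
        (supAbs (deriv (fun y => v y - g y * u y)) + |k| * supAbs (fun y => v y - g y * u y)
            ≤ C * supAbs u * l1C (deriv (deriv g))) ∧
        (supAbs (deriv v)
            ≤ C * (supAbs (deriv u) * supAbs g + supAbs u * l1C (deriv (deriv g)))) ∧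
        (supAbs v ≤ C * supAbs u * (supAbs g + |k|⁻¹ * l1C (deriv (deriv g))))) := by
  refine ⟨4*c0+10, by nlinarith [c0_pos], ?_⟩
  intro k hk
  refine ⟨fun u hu hpu => partA hk hu hpu, fun u g v hu hpu hg hpg hv hpv hfv => partB hk hu hpu hg hpg hv hpv hfv⟩
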